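/- Let R be a field of characteristic different from 2 and c ∈ M_2(R) any 2×2 matrix. Then the extension S_2(c,R)/R is a Frobenius extension. -/

import Mathlib

set_option synthInstance.maxHeartbeats 1000000
set_option maxHeartbeats 1000000

section frobAux
variable {R : Type*} [Field R]

private def entryL (i j : Fin 2) : Matrix (Fin 2) (Fin 2) R →ₗ[R] R where
  toFun m := m i j
  map_add' _ _ := rfl
  map_smul' _ _ := rfl

private lemma entryL_apply (i j : Fin 2) (m : Matrix (Fin 2) (Fin 2) R) :
    entryL i j m = m i j := rfl

private lemma hc_self' (c : Matrix (Fin 2) (Fin 2) R) :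
    c ∈ Subalgebra.centralizer R {c} := by
  rw [Subalgebra.mem_centralizer_iff]
  rintro g hg
  simp only [Set.mem_singleton_iff] at hg
  rw [hg]

private lemma comm_of_mem {c m : Matrix (Fin 2) (Fin 2) R}
    (hm : m ∈ Subalgebra.centralizer R {c}) : c * m = m * c :=
  (Subalgebra.mem_centralizer_iff R).mp hm c rfl

private lemma helper (c : Matrix (Fin 2) (Fin 2) R)
    (E : Subalgebra.centralizer R {c} →ₗ[R] R)
    (hE1 : E 1 = 0) (hEc : E ⟨c, hc_self' c⟩ = 1)
    (hspan : ∀ b : Subalgebra.centralizer R {c}, ∃ α β : R,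
        b = α • 1 + β • (⟨c, hc_self' c⟩ : Subalgebra.centralizer R {c})) :
    ∃ (m : ℕ) (E : Subalgebra.centralizer R {c} →ₗ[R] R)
      (X Y : Fin m → Subalgebra.centralizer R {c}),
      ∀ b : Subalgebra.centralizer R {c},
        (∑ i : Fin m, E (b * X i) • Y i = b) ∧
        (∑ i : Fin m, E (Y i * b) • X i = b) := by
  set x : Subalgebra.centralizer R {c} := ⟨c, hc_self' c⟩ with hxdef
  obtain ⟨α₀, β₀, hx2⟩ := hspan (x * x)
  have hEx2 : E (x * x) = β₀ := by
    rw [hx2]; simp [hE1, hEc]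
  refine ⟨2, E, ![1, x], ![x - β₀ • 1, 1], ?_⟩
  intro b
  obtain ⟨α, β, rfl⟩ := hspan b
  have h1 : (α • 1 + β • x) * (1 : Subalgebra.centralizer R {c}) = α • 1 + β • x := mul_one _
  have h2 : (α • 1 + β • x) * x = α • x + β • (x * x) := by
    rw [add_mul, smul_mul_assoc, smul_mul_assoc, one_mul]
  have h3 : (x - β₀ • 1) * (α • 1 + β • x) = α • x + β • (x * x) - (β₀ * α) • 1 - (β₀ * β) • x := by
    rw [sub_mul, smul_mul_assoc, one_mul, mul_add, mul_smul_comm, mul_smul_comm, mul_one]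
    module
  constructor
  · rw [Fin.sum_univ_two]
    simp only [Matrix.cons_val_zero, Matrix.cons_val_one, Matrix.head_cons]
    rw [h1, h2]
    simp only [map_add, map_smul, hE1, hEc, hEx2, smul_eq_mul]
    module
  · rw [Fin.sum_univ_two]
    simp only [Matrix.cons_val_zero, Matrix.cons_val_one, Matrix.head_cons]
    rw [one_mul, h3]
    simp only [map_add, map_sub, map_smul, hE1, hEc, hEx2, smul_eq_mul]
    module

private lemma span1 (c : Matrix (Fin 2) (Fin 2) R) (h : c 0 1 ≠ 0) :
    ∀ b : Subalgebra.centralizer R {c}, ∃ α β : R,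
      b = α • 1 + β • (⟨c, hc_self' c⟩ : Subalgebra.centralizer R {c}) := by
  rintro ⟨m, hm⟩
  have hcm := comm_of_mem hm
  have e00 : (c * m) 0 0 = (m * c) 0 0 := by rw [hcm]
  have e01 : (c * m) 0 1 = (m * c) 0 1 := by rw [hcm]
  rw [Matrix.mul_apply, Matrix.mul_apply, Fin.sum_univ_two, Fin.sum_univ_two] at e00 e01
  refine ⟨m 0 0 - m 0 1 * (c 0 1)⁻¹ * c 0 0, m 0 1 * (c 0 1)⁻¹, ?_⟩
  apply Subtype.ext
  show m = _
  push_cast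
  ext i j
  fin_cases i <;> fin_cases j <;>
    simp only [Matrix.add_apply, Matrix.smul_apply, Matrix.one_apply, smul_eq_mul,
      Fin.zero_eta, Fin.mk_one, if_true, if_false, Fin.isValue, ne_eq, zero_ne_one,
      one_ne_zero, not_false_eq_true, Matrix.one_apply_ne, Matrix.one_apply_eq,
      mul_zero, mul_one, add_zero, zero_add] <;>
    field_simp
  · linear_combination
  · linear_combination e00
  · linear_combination e01

private lemma span2 (c : Matrix (Fin 2) (Fin 2) R) (h : c 1 0 ≠ 0) :
    ∀ b : Subalgebra.centralizer R {c}, ∃ α β : R,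
      b = α • 1 + β • (⟨c, hc_self' c⟩ : Subalgebra.centralizer R {c}) := by
  rintro ⟨m, hm⟩
  have hcm := comm_of_mem hm
  have e11 : (c * m) 1 1 = (m * c) 1 1 := by rw [hcm]
  have e10 : (c * m) 1 0 = (m * c) 1 0 := by rw [hcm]
  rw [Matrix.mul_apply, Matrix.mul_apply, Fin.sum_univ_two, Fin.sum_univ_two] at e11 e10
  refine ⟨m 0 0 - m 1 0 * (c 1 0)⁻¹ * c 0 0, m 1 0 * (c 1 0)⁻¹, ?_⟩
  apply Subtype.ext
  show m = _
  push_cast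
  ext i j
  fin_cases i <;> fin_cases j <;>
    simp only [Matrix.add_apply, Matrix.smul_apply, Matrix.one_apply, smul_eq_mul,
      Fin.zero_eta, Fin.mk_one, if_true, if_false, Fin.isValue, ne_eq, zero_ne_one,
      one_ne_zero, not_false_eq_true, Matrix.one_apply_ne, Matrix.one_apply_eq,
      mul_zero, mul_one, add_zero, zero_add] <;>
    field_simp
  · linear_combination
  · linear_combination e11
  · linear_combination -e10

private lemma span3 (c : Matrix (Fin 2) (Fin 2) R) (h01 : c 0 1 = 0) (h10 : c 1 0 = 0)
    (hd : c 0 0 ≠ c 1 1) :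
    ∀ b : Subalgebra.centralizer R {c}, ∃ α β : R,
      b = α • 1 + β • (⟨c, hc_self' c⟩ : Subalgebra.centralizer R {c}) := by
  rintro ⟨m, hm⟩
  have hcm := comm_of_mem hm
  have e01 : (c * m) 0 1 = (m * c) 0 1 := by rw [hcm]
  have e10 : (c * m) 1 0 = (m * c) 1 0 := by rw [hcm]
  rw [Matrix.mul_apply, Matrix.mul_apply, Fin.sum_univ_two, Fin.sum_univ_two] at e01 e10
  have hsub : c 0 0 - c 1 1 ≠ 0 := sub_ne_zero.mpr hd
  have hq : m 0 1 = 0 := by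
    have h' : m 0 1 * (c 0 0 - c 1 1) = 0 := by
      rw [h01] at e01; linear_combination e01
    exact (mul_eq_zero.mp h').resolve_right hsub
  have hr : m 1 0 = 0 := by
    have h' : m 1 0 * (c 0 0 - c 1 1) = 0 := by
      rw [h10] at e10; linear_combination -e10
    exact (mul_eq_zero.mp h').resolve_right hsub
  refine ⟨m 0 0 - (m 0 0 - m 1 1) * (c 0 0 - c 1 1)⁻¹ * c 0 0,
    (m 0 0 - m 1 1) * (c 0 0 - c 1 1)⁻¹, ?_⟩
  apply Subtype.ext
  show m = _
  push_cast
  ext i j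
  fin_cases i <;> fin_cases j <;>
    simp only [Matrix.add_apply, Matrix.smul_apply, Matrix.one_apply, smul_eq_mul,
      Fin.zero_eta, Fin.mk_one, if_true, if_false, Fin.isValue, ne_eq, zero_ne_one,
      one_ne_zero, not_false_eq_true, Matrix.one_apply_ne, Matrix.one_apply_eq,
      mul_zero, mul_one, add_zero, zero_add, h01, h10, hq, hr] <;>
    field_simp
  ring
  ring

private lemma mem_all (c : Matrix (Fin 2) (Fin 2) R) (h01 : c 0 1 = 0) (h10 : c 1 0 = 0)
    (hdd : c 0 0 = c 1 1) (m : Matrix (Fin 2) (Fin 2) R) :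
    m ∈ Subalgebra.centralizer R {c} := by
  have hceq : c = c 0 0 • (1 : Matrix (Fin 2) (Fin 2) R) := by
    ext i j
    fin_cases i <;> fin_cases j <;>
      simp [Matrix.smul_apply, Matrix.one_apply, h01, h10, hdd]
  rw [Subalgebra.mem_centralizer_iff]
  rintro g hg
  simp only [Set.mem_singleton_iff] at hg
  subst hg
  rw [hceq, Matrix.smul_mul, Matrix.mul_smul, one_mul, mul_one]

private lemma scalar_case (c : Matrix (Fin 2) (Fin 2) R) (h01 : c 0 1 = 0) (h10 : c 1 0 = 0)
    (hdd : c 0 0 = c 1 1) :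
    ∃ (m : ℕ) (E : Subalgebra.centralizer R {c} →ₗ[R] R)
      (X Y : Fin m → Subalgebra.centralizer R {c}),
      ∀ b : Subalgebra.centralizer R {c},
        (∑ i : Fin m, E (b * X i) • Y i = b) ∧
        (∑ i : Fin m, E (Y i * b) • X i = b) := by
  set S := Subalgebra.centralizer R (A := Matrix (Fin 2) (Fin 2) R) {c} with hS
  let e : Fin 2 → Fin 2 → S := fun i j =>
    ⟨Matrix.single i j 1, mem_all c h01 h10 hdd _⟩
  let E : S →ₗ[R] R :=
    (Matrix.traceLinearMap (Fin 2) R R).comp (Subalgebra.val S).toLinearMap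
  refine ⟨4, E, ![e 0 0, e 0 1, e 1 0, e 1 1], ![e 0 0, e 1 0, e 0 1, e 1 1], ?_⟩
  rintro ⟨m, hm⟩
  constructor <;>
  · apply Subtype.ext
    rw [Fin.sum_univ_four]
    push_cast
    ext i j
    fin_cases i <;> fin_cases j <;>
      simp [e, E, Matrix.trace, Matrix.diag, Matrix.mul_apply, Fin.sum_univ_two,
        Matrix.single, Matrix.smul_apply, Matrix.add_apply, Matrix.one_apply]


end frobAux

set_option synthInstance.maxHeartbeats 1000000 in
/-- Over a field of characteristic different from 2, for every `c ∈ M_2(R)` the extension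
`S_2(c,R)/R` (the centralizer of `c` in `M_2(R)`) is a Frobenius extension. -/
theorem stmt_16 (R : Type*) [Field R] (hchar : (2 : R) ≠ 0)
    (c : Matrix (Fin 2) (Fin 2) R) :
    ∃ (m : ℕ) (E : Subalgebra.centralizer R {c} →ₗ[R] R)
      (X Y : Fin m → Subalgebra.centralizer R {c}),
      ∀ b : Subalgebra.centralizer R {c},
        (∑ i : Fin m, E (b * X i) • Y i = b) ∧
        (∑ i : Fin m, E (Y i * b) • X i = b) := by
  rcases ne_or_eq (c 0 1) 0 with h | h01
  · refine helper c ((c 0 1)⁻¹ • ((entryL 0 1).comp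
      (Subalgebra.val (Subalgebra.centralizer R {c})).toLinearMap)) ?_ ?_ (span1 c h)
    · simp [entryL_apply, Matrix.one_apply]
    · simp [entryL_apply, inv_mul_cancel₀ h]
  rcases ne_or_eq (c 1 0) 0 with h | h10
  · refine helper c ((c 1 0)⁻¹ • ((entryL 1 0).comp
      (Subalgebra.val (Subalgebra.centralizer R {c})).toLinearMap)) ?_ ?_ (span2 c h)
    · simp [entryL_apply, Matrix.one_apply]
    · simp [entryL_apply, inv_mul_cancel₀ h]
  rcases ne_or_eq (c 0 0) (c 1 1) with h | hdd
  · refine helper c ((c 0 0 - c 1 1)⁻¹ • (((entryL 0 0 : Matrix (Fin 2) (Fin 2) R →ₗ[R] R)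
      - entryL 1 1).comp
      (Subalgebra.val (Subalgebra.centralizer R {c})).toLinearMap)) ?_ ?_ (span3 c h01 h10 h)
    · simp [entryL_apply, Matrix.one_apply]
    · simp [entryL_apply, inv_mul_cancel₀ (sub_ne_zero.mpr h)]
  exact scalar_case c h01 h10 hdd
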